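/- Let F⁽¹⁾ = F⁽⁰⁾ ≥ 0 and let {F⁽ᵏ⁾} be a sequence of nonnegative reals satisfying F⁽ᵏ⁺¹⁾ ≤ γ₁ F⁽ᵏ⁾ + γ₂ F⁽ᵏ⁻¹⁾ for all k ≥ 1, where γ₂ ≥ 0 and γ₁ + γ₂ < 1. Define q = (γ₁ + √(γ₁² + 4γ₂))/2 if γ₂ > 0 and q = γ₁ if γ₂ = 0, and τ = q − γ₁. Then for all k ≥ 0, F⁽ᵏ⁺¹⁾ ≤ qᵏ(1 + τ) F⁽⁰⁾. -/
import Mathlib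


theorem stmt_1 (F : ℕ → ℝ) (γ₁ γ₂ : ℝ)
    (hnn : ∀ k, 0 ≤ F k) (h10 : F 1 = F 0)
    (hγ₂ : 0 ≤ γ₂) (hsum : γ₁ + γ₂ < 1)
    (hrec : ∀ k ≥ 1, F (k + 1) ≤ γ₁ * F k + γ₂ * F (k - 1)) :
    ∀ k : ℕ,
      F (k + 1) ≤
        (if 0 < γ₂ then (γ₁ + Real.sqrt (γ₁ ^ 2 + 4 * γ₂)) / 2 else γ₁) ^ k *
          (1 + ((if 0 < γ₂ then (γ₁ + Real.sqrt (γ₁ ^ 2 + 4 * γ₂)) / 2 else γ₁) - γ₁)) * F 0 := by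
  by_cases hpos : 0 < γ₂
  · simp only [if_pos hpos]
    set s := Real.sqrt (γ₁ ^ 2 + 4 * γ₂) with hs
    have hnnarg : (0:ℝ) ≤ γ₁ ^ 2 + 4 * γ₂ := by positivity
    have hs2 : s ^ 2 = γ₁ ^ 2 + 4 * γ₂ := Real.sq_sqrt hnnarg
    have habs : |γ₁| < s := by
      have : |γ₁| = Real.sqrt (γ₁ ^ 2) := by
        rw [Real.sqrt_sq_eq_abs]
      rw [this, hs]
      apply Real.sqrt_lt_sqrt (by positivity)
      linarith
    have h1 : -γ₁ < s := lt_of_le_of_lt (neg_le_abs γ₁) habs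
    have h2 : γ₁ < s := lt_of_le_of_lt (le_abs_self γ₁) habs
    set q := (γ₁ + s) / 2 with hq
    set τ := q - γ₁ with hτ
    have hq0 : 0 < q := by rw [hq]; linarith
    have hτ0 : 0 < τ := by rw [hτ, hq]; linarith
    have hqτ : q * τ = γ₂ := by
      rw [hτ, hq]; nlinarith [hs2]
    -- main invariant
    have key : ∀ k : ℕ, F (k + 1) + τ * F k ≤ q ^ k * ((1 + τ) * F 0) := by
      intro k
      induction k with
      | zero => exact le_of_eq (by rw [h10]; ring)
      | succ n ih =>
        have hr := hrec (n + 1) (Nat.le_add_left 1 n)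
        simp only [Nat.add_sub_cancel] at hr
        have : F (n + 1 + 1) + τ * F (n + 1) ≤ q * (F (n + 1) + τ * F n) := by
          have : γ₁ * F (n + 1) + γ₂ * F n + τ * F (n + 1) = q * (F (n + 1) + τ * F n) := by
            rw [← hqτ, hτ]; ring
          nlinarith [hr]
        calc F (n + 1 + 1) + τ * F (n + 1) ≤ q * (F (n + 1) + τ * F n) := this
          _ ≤ q * (q ^ n * ((1 + τ) * F 0)) := by
              exact mul_le_mul_of_nonneg_left ih (le_of_lt hq0)
          _ = q ^ (n + 1) * ((1 + τ) * F 0) := by ring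
    intro k
    have := key k
    have hτF : 0 ≤ τ * F k := mul_nonneg (le_of_lt hτ0) (hnn k)
    calc F (k + 1) ≤ F (k + 1) + τ * F k := by linarith
      _ ≤ q ^ k * ((1 + τ) * F 0) := this
      _ = q ^ k * (1 + (q - γ₁)) * F 0 := by rw [← hτ]; ring
  · simp only [if_neg hpos, sub_self, add_zero]
    have hz : γ₂ = 0 := le_antisymm (not_lt.mp hpos) hγ₂
    by_cases hγ₁ : 0 ≤ γ₁
    · intro k
      induction k with
      | zero => rw [h10]; simp
      | succ n ih =>
        have hr := hrec (n + 1) (Nat.le_add_left 1 n)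
        simp only [Nat.add_sub_cancel, hz, zero_mul, add_zero] at hr
        calc F (n + 1 + 1) ≤ γ₁ * F (n + 1) := hr
          _ ≤ γ₁ * (γ₁ ^ n * 1 * F 0) := mul_le_mul_of_nonneg_left ih hγ₁
          _ = γ₁ ^ (n + 1) * 1 * F 0 := by ring
    · push_neg at hγ₁
      -- F 0 = 0, and then all F k = 0
      have hF0 : F 0 = 0 := by
        have hr := hrec 1 le_rfl
        simp only [hz, zero_mul, add_zero, h10] at hr
        norm_num at hr
        nlinarith [hnn 0, hnn 2, hr]
      have hall : ∀ k, F k = 0 := by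
        intro k
        induction k with
        | zero => exact hF0
        | succ n ih =>
          rcases Nat.eq_zero_or_pos n with h | h
          · subst h; rw [h10]; exact hF0
          · have hr := hrec n h
            simp only [hz, zero_mul, add_zero, ih, mul_zero] at hr
            exact le_antisymm hr (hnn (n + 1))
      intro k
      rw [hall (k + 1), hF0, mul_zero]
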